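/- Fix integers ℓ ≥ 1 and k ≥ 1 and set N = k + 2ℓ + 1. Let x ∈ ℤ^ℓ be strictly dominant (x₁ > x₂ > ⋯ > x_ℓ ≥ 1) and regular (x_i + x_j ≢ 0 (mod N) for all i ≠ j, and 2x_i ≢ 0 (mod N) for all i), and assume N < 2x₁ and x₁ < N. Then there exists an integer i with 1 ≤ i ≤ ℓ such that y := w_i(x) is strictly dominant (y₁ > y₂ > ⋯ > y_ℓ ≥ 1) and satisfies y₁ < x₁. -/
import Mathlib


open BigOperators

/-- The generators of the affine Weyl group `W̊ ⋉ N ℤ^ℓ` acting on `ℤ^ℓ`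
(coordinates `0`-indexed, so `x 0` is the first coordinate `x₁`):
`s₀ x = (N - x₁, x₂, …, x_ℓ)`; for `1 ≤ j ≤ ℓ - 1`, `s_j` transposes the
(1-indexed) coordinates `j` and `j+1`; `s_ℓ` negates the last coordinate. -/
def sRefl (ℓ : ℕ) (N : ℤ) (j : ℕ) (x : Fin ℓ → ℤ) : Fin ℓ → ℤ :=
  if j = 0 then
    fun i => if i.1 = 0 then N - x i else x i
  else if hj : j < ℓ then
    fun i => if i.1 = j - 1 then x ⟨j, hj⟩
             else if i.1 = j then x ⟨j - 1, by omega⟩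
             else x i
  else
    fun i => if i.1 = ℓ - 1 then - x i else x i

/-- The elements `w₀ = id` and `w_i = s_{i-1} s_{i-2} ⋯ s₁ s₀` for `i ≥ 1`. -/
def wElem (ℓ : ℕ) (N : ℤ) : ℕ → (Fin ℓ → ℤ) → (Fin ℓ → ℤ)
  | 0 => id
  | (i + 1) => fun x => sRefl ℓ N i (wElem ℓ N i x)

/-- A point `x ∈ ℤ^ℓ` is strictly dominant if `x₁ > x₂ > ⋯ > x_ℓ ≥ 1`. -/
def StrictDom (ℓ : ℕ) (x : Fin ℓ → ℤ) : Prop :=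
  (∀ i j : Fin ℓ, i < j → x j < x i) ∧ (∀ i : Fin ℓ, 1 ≤ x i)

/-- A point `x ∈ ℤ^ℓ` is regular (has trivial stabilizer in `W̊ ⋉ N ℤ^ℓ`) if
`x_i + x_j ≢ 0 (mod N)` for `i ≠ j` and `2 x_i ≢ 0 (mod N)` for all `i`. -/
def RegularPt (ℓ : ℕ) (N : ℤ) (x : Fin ℓ → ℤ) : Prop :=
  (∀ i j : Fin ℓ, i ≠ j → ¬ (N ∣ x i + x j)) ∧ (∀ i : Fin ℓ, ¬ (N ∣ 2 * x i))

lemma wElem_eval (ℓ : ℕ) (N : ℤ) (x : Fin ℓ → ℤ) (hℓ : 0 < ℓ) :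
    ∀ i, ∀ _ : 1 ≤ i, ∀ hil : i ≤ ℓ, ∀ j : Fin ℓ,
      wElem ℓ N i x j =
        if h : j.1 + 1 < i then x ⟨j.1 + 1, by omega⟩
        else if j.1 + 1 = i then N - x ⟨0, hℓ⟩
        else x j := by
  intro i
  induction i with
  | zero => omega
  | succ n ih =>
    intro _ hle j
    rcases Nat.eq_zero_or_pos n with hn | hn
    · subst hn
      show sRefl ℓ N 0 (wElem ℓ N 0 x) j = _
      simp only [wElem, sRefl, if_pos rfl, id]
      by_cases hj : j.1 = 0
      · have hje : j = ⟨0, hℓ⟩ := Fin.ext hj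
        subst hje
        simp
      · simp [hj]
    · show sRefl ℓ N n (wElem ℓ N n x) j = _
      have hnℓ : n < ℓ := by omega
      have hn0 : n ≠ 0 := by omega
      simp only [sRefl, if_neg hn0, dif_pos hnℓ]
      rw [ih hn (by omega) j, ih hn (by omega) ⟨n, hnℓ⟩, ih hn (by omega) ⟨n - 1, by omega⟩]
      simp only []
      split_ifs <;>
        first
          | rfl
          | (apply congrArg; apply Fin.ext; simp only []; omega)
          | (exfalso; omega)

/-- The key inductive step of the alcove algorithm: with `N = k + 2ℓ + 1`, if
`x ∈ ℤ^ℓ` is strictly dominant and regular with `N < 2 x₁` and `x₁ < N`, then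
some `w_i` with `1 ≤ i ≤ ℓ` maps `x` to a strictly dominant point whose first
coordinate is strictly smaller. -/
theorem alcove_step (ℓ k : ℕ) (hl : 1 ≤ ℓ) (hk : 1 ≤ k)
    (x : Fin ℓ → ℤ)
    (hdom : StrictDom ℓ x)
    (hreg : RegularPt ℓ ((k : ℤ) + 2 * ℓ + 1) x)
    (hbig : (k : ℤ) + 2 * ℓ + 1 < 2 * x ⟨0, by omega⟩)
    (hx1 : x ⟨0, by omega⟩ < (k : ℤ) + 2 * ℓ + 1) :
    ∃ i : ℕ, 1 ≤ i ∧ i ≤ ℓ ∧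
      StrictDom ℓ (wElem ℓ ((k : ℤ) + 2 * ℓ + 1) i x) ∧
      (wElem ℓ ((k : ℤ) + 2 * ℓ + 1) i x) ⟨0, by omega⟩ < x ⟨0, by omega⟩ := by
  obtain ⟨hmono, hpos⟩ := hdom
  obtain ⟨hreg1, hreg2⟩ := hreg
  have hℓ : 0 < ℓ := hl
  set N : ℤ := (k : ℤ) + 2 * ℓ + 1 with hNdef
  set a : ℤ := N - x ⟨0, hℓ⟩ with hadef
  have hanti : ∀ p q : Fin ℓ, p ≤ q → x q ≤ x p := by
    intro p q hpq
    rcases eq_or_lt_of_le hpq with h | h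
    · rw [h]
    · exact le_of_lt (hmono p q h)
  have ha1 : 1 ≤ a := by simp only [hadef]; omega
  have ha2 : a < x ⟨0, hℓ⟩ := by simp only [hadef]; omega
  have hane : ∀ j : Fin ℓ, a ≠ x j := by
    intro j hj
    by_cases h0 : j = ⟨0, hℓ⟩
    · subst h0
      exact hreg2 ⟨0, hℓ⟩ ⟨1, by omega⟩
    · exact hreg1 ⟨0, hℓ⟩ j (fun h => h0 h.symm) ⟨1, by omega⟩
  have hT : (Finset.univ.filter (fun m : Fin ℓ => a < x m)).Nonempty :=
    ⟨⟨0, hℓ⟩, by simp [ha2]⟩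
  set M : Fin ℓ := Finset.max' _ hT with hMdef
  have hMlt : M.1 < ℓ := M.2
  have hMmem : a < x M := by
    have := Finset.max'_mem _ hT
    rw [Finset.mem_filter] at this
    exact this.2
  have hMub : ∀ j : Fin ℓ, M.1 < j.1 → x j < a := by
    intro j hj
    have h1 : ¬ a < x j := by
      intro h
      have := Finset.le_max' (Finset.univ.filter fun m : Fin ℓ => a < x m) j
        (Finset.mem_filter.mpr ⟨Finset.mem_univ _, h⟩)
      rw [Fin.le_def] at this
      omega
    have h2 := hane j
    omega
  have hMlb : ∀ j : Fin ℓ, j.1 ≤ M.1 → a < x j := fun j hj =>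
    lt_of_lt_of_le hMmem (hanti j M (Fin.le_def.mpr hj))
  have hyA : ∀ j : Fin ℓ, ∀ hj : j.1 < M.1,
      wElem ℓ N (M.1 + 1) x j = x ⟨j.1 + 1, by omega⟩ := by
    intro j hj
    rw [wElem_eval ℓ N x hℓ (M.1 + 1) (by omega) M.2 j, dif_pos (by omega)]
  have hyB : ∀ j : Fin ℓ, j.1 = M.1 → wElem ℓ N (M.1 + 1) x j = a := by
    intro j hj
    rw [wElem_eval ℓ N x hℓ (M.1 + 1) (by omega) M.2 j, dif_neg (by omega),
      if_pos (by omega), ← hadef]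
  have hyC : ∀ j : Fin ℓ, M.1 < j.1 → wElem ℓ N (M.1 + 1) x j = x j := by
    intro j hj
    rw [wElem_eval ℓ N x hℓ (M.1 + 1) (by omega) M.2 j, dif_neg (by omega),
      if_neg (by omega)]
  refine ⟨M.1 + 1, by omega, M.2, ⟨?_, ?_⟩, ?_⟩
  · intro p q hpq
    have hpq' : p.1 < q.1 := hpq
    rcases Nat.lt_trichotomy q.1 M.1 with h | h | h
    · rw [hyA q h, hyA p (by omega)]
      exact hmono _ _ (Fin.mk_lt_mk.mpr (by omega))
    · rw [hyB q h, hyA p (by omega)]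
      exact hMlb ⟨p.1 + 1, by omega⟩ (by simp only []; omega)
    · rw [hyC q h]
      rcases Nat.lt_trichotomy p.1 M.1 with hp | hp | hp
      · rw [hyA p hp]
        exact hmono _ _ (Fin.mk_lt_mk.mpr (by omega))
      · rw [hyB p hp]
        exact hMub q h
      · rw [hyC p hp]
        exact hmono p q hpq
  · intro j
    rcases Nat.lt_trichotomy j.1 M.1 with h | h | h
    · rw [hyA j h]; exact hpos _
    · rw [hyB j h]; exact ha1
    · rw [hyC j h]; exact hpos _
  · rcases Nat.eq_zero_or_pos M.1 with h | h
    · rw [hyB ⟨0, hℓ⟩ h.symm]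
      exact ha2
    · rw [hyA ⟨0, hℓ⟩ h]
      exact hmono _ _ (Fin.mk_lt_mk.mpr (by omega))
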